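/- Let U = [0, 2π] and for an integer n ≥ 2 let f_n(x) = x + n⁻² sin(nx) and f(x) = x. Then ‖A_{f_n} − A_f‖_* = sup_{a,b ∈ [0,2π]} |∫_a^b (−n sin(nx)/(n + cos(nx))) dx| = ln((n+1)/(n−1)). -/

import Mathlib

open Real

/-- The oscillation norm `‖h‖_* := sup_{a,b ∈ U} |∫_a^b h(x) dx|`. -/
noncomputable def oscNorm (U : Set ℝ) (h : ℝ → ℝ) : ℝ :=
  ⨆ p : U × U, |∫ x in (p.1 : ℝ)..(p.2 : ℝ), h x|

/-- **Example 2 (oscillation norm computation):** for `f_n(x) = x + n⁻² sin(nx)` and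
`f(x) = x` on `[0,2π]`,
`‖A_{f_n} - A_f‖_* = sup_{a,b} |∫_a^b (-n sin(nx)/(n + cos(nx))) dx| = ln((n+1)/(n-1))`. -/
theorem stmt_16 (n : ℕ) (hn : 2 ≤ n) :
    oscNorm (Set.Icc (0 : ℝ) (2 * π))
        (fun x => deriv (deriv (fun x : ℝ => x + ((n : ℝ) ^ 2)⁻¹ * sin (n * x))) x /
            deriv (fun x : ℝ => x + ((n : ℝ) ^ 2)⁻¹ * sin (n * x)) x -
          deriv (deriv (fun x : ℝ => x)) x / deriv (fun x : ℝ => x) x) =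
      oscNorm (Set.Icc (0 : ℝ) (2 * π))
        (fun x => -((n : ℝ) * sin (n * x)) / ((n : ℝ) + cos (n * x))) ∧
    oscNorm (Set.Icc (0 : ℝ) (2 * π))
        (fun x => -((n : ℝ) * sin (n * x)) / ((n : ℝ) + cos (n * x))) =
      log (((n : ℝ) + 1) / ((n : ℝ) - 1)) := by
  have hn2 : (2:ℝ) ≤ (n:ℝ) := by exact_mod_cast hn
  have hnpos : (0:ℝ) < n := by linarith
  have hne : (n:ℝ) ≠ 0 := ne_of_gt hnpos
  have hden : ∀ x : ℝ, 0 < (n:ℝ) + cos (n * x) := by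
    intro x
    have := Real.neg_one_le_cos (n * x)
    linarith
  -- Part 1 : pointwise equality of integrands
  have hmul : ∀ y : ℝ, HasDerivAt (fun x : ℝ => (n:ℝ) * x) (n:ℝ) y := by
    intro y
    simpa using (hasDerivAt_id y).const_mul (n:ℝ)
  have hd1 : deriv (fun x : ℝ => x + ((n : ℝ) ^ 2)⁻¹ * sin (n * x))
      = fun x => 1 + ((n:ℝ))⁻¹ * cos (n * x) := by
    funext y
    have hs : HasDerivAt (fun x : ℝ => sin ((n:ℝ) * x)) (cos ((n:ℝ)*y) * (n:ℝ)) y := by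
      simpa [Function.comp_def] using (Real.hasDerivAt_sin ((n:ℝ)*y)).comp y (hmul y)
    have h : HasDerivAt (fun x : ℝ => x + ((n : ℝ) ^ 2)⁻¹ * sin ((n:ℝ) * x))
        (1 + ((n:ℝ) ^ 2)⁻¹ * (cos ((n:ℝ)*y) * (n:ℝ))) y :=
      (hasDerivAt_id y).add (hs.const_mul _)
    rw [h.deriv]
    field_simp
  have hd2 : ∀ x : ℝ, deriv (fun x => 1 + ((n:ℝ))⁻¹ * cos ((n:ℝ) * x)) x
      = -sin ((n:ℝ) * x) := by
    intro x
    have hc : HasDerivAt (fun x : ℝ => cos ((n:ℝ) * x)) (-sin ((n:ℝ)*x) * (n:ℝ)) x := by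
      simpa [Function.comp_def] using (Real.hasDerivAt_cos ((n:ℝ)*x)).comp x (hmul x)
    have h : HasDerivAt (fun x : ℝ => 1 + ((n:ℝ))⁻¹ * cos ((n:ℝ) * x))
        (((n:ℝ))⁻¹ * (-sin ((n:ℝ)*x) * (n:ℝ))) x := by
      exact (hc.const_mul ((n:ℝ))⁻¹).const_add 1
    rw [h.deriv]
    field_simp
  have hfun : (fun x => deriv (deriv (fun x : ℝ => x + ((n : ℝ) ^ 2)⁻¹ * sin (n * x))) x /
            deriv (fun x : ℝ => x + ((n : ℝ) ^ 2)⁻¹ * sin (n * x)) x -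
          deriv (deriv (fun x : ℝ => x)) x / deriv (fun x : ℝ => x) x)
      = (fun x => -((n : ℝ) * sin (n * x)) / ((n : ℝ) + cos (n * x))) := by
    funext x
    rw [hd1, hd2 x, deriv_id'']
    have : deriv (fun _ : ℝ => (1:ℝ)) x = 0 := deriv_const x 1
    rw [this]
    have hd : (0:ℝ) < 1 + ((n:ℝ))⁻¹ * cos ((n:ℝ) * x) := by
      have h := hden x
      have : 1 + ((n:ℝ))⁻¹ * cos ((n:ℝ) * x) = ((n:ℝ) + cos ((n:ℝ)*x)) / n := by
        field_simp
      rw [this]; positivity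
    field_simp
    ring
  refine ⟨by rw [hfun], ?_⟩
  -- Part 2
  set F : ℝ → ℝ := fun x => log ((n:ℝ) + cos ((n:ℝ) * x)) with hF
  have hFd : ∀ x : ℝ, HasDerivAt F (-((n:ℝ) * sin ((n:ℝ)*x)) / ((n:ℝ) + cos ((n:ℝ)*x))) x := by
    intro x
    have hc : HasDerivAt (fun x : ℝ => (n:ℝ) + cos ((n:ℝ) * x)) (-sin ((n:ℝ)*x) * (n:ℝ)) x := by
      have : HasDerivAt (fun x : ℝ => cos ((n:ℝ) * x)) (-sin ((n:ℝ)*x) * (n:ℝ)) x := by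
        simpa [Function.comp_def] using (Real.hasDerivAt_cos ((n:ℝ)*x)).comp x (hmul x)
      exact this.const_add _
    have := hc.log (ne_of_gt (hden x))
    convert this using 1
    ring
  have hcont : Continuous (fun x => -((n : ℝ) * sin ((n:ℝ) * x)) / ((n : ℝ) + cos ((n:ℝ) * x))) := by
    exact Continuous.div
      (continuous_const.mul (Real.continuous_sin.comp (continuous_const.mul continuous_id))).neg
      (continuous_const.add (Real.continuous_cos.comp (continuous_const.mul continuous_id)))
      (fun x => (hden x).ne')
  have hint : ∀ a b : ℝ, (∫ x in a..b, -((n : ℝ) * sin ((n:ℝ) * x)) / ((n : ℝ) + cos ((n:ℝ) * x)))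
      = F b - F a := by
    intro a b
    exact intervalIntegral.integral_eq_sub_of_hasDerivAt (fun x _ => hFd x)
      (hcont.intervalIntegrable a b)
  have hFub : ∀ x : ℝ, F x ≤ log ((n:ℝ) + 1) := by
    intro x
    apply Real.log_le_log (hden x)
    have := Real.cos_le_one ((n:ℝ)*x); linarith
  have hFlb : ∀ x : ℝ, log ((n:ℝ) - 1) ≤ F x := by
    intro x
    apply Real.log_le_log (by linarith)
    have := Real.neg_one_le_cos ((n:ℝ)*x); linarith
  have hlogdiv : log (((n : ℝ) + 1) / ((n : ℝ) - 1)) = log ((n:ℝ)+1) - log ((n:ℝ)-1) :=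
    Real.log_div (by linarith) (by linarith)
  have hbound : ∀ p : (Set.Icc (0:ℝ) (2*π)) × (Set.Icc (0:ℝ) (2*π)),
      |∫ x in (p.1 : ℝ)..(p.2 : ℝ), -((n : ℝ) * sin ((n:ℝ) * x)) / ((n : ℝ) + cos ((n:ℝ) * x))|
        ≤ log (((n : ℝ) + 1) / ((n : ℝ) - 1)) := by
    intro p
    rw [hint, hlogdiv, abs_sub_le_iff]
    constructor
    · linarith [hFub (p.2 : ℝ), hFlb (p.1 : ℝ)]
    · linarith [hFub (p.1 : ℝ), hFlb (p.2 : ℝ)]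
  have hbdd : BddAbove (Set.range fun p : (Set.Icc (0:ℝ) (2*π)) × (Set.Icc (0:ℝ) (2*π)) =>
      |∫ x in (p.1 : ℝ)..(p.2 : ℝ), -((n : ℝ) * sin ((n:ℝ) * x)) / ((n : ℝ) + cos ((n:ℝ) * x))|) := by
    refine ⟨log (((n : ℝ) + 1) / ((n : ℝ) - 1)), ?_⟩
    rintro _ ⟨p, rfl⟩
    exact hbound p
  -- attainment point
  have hπ : (0:ℝ) < π := Real.pi_pos
  have hmem1 : π / (n:ℝ) ∈ Set.Icc (0:ℝ) (2*π) := by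
    constructor
    · positivity
    · rw [div_le_iff₀ hnpos]
      nlinarith
  have hmem2 : (0:ℝ) ∈ Set.Icc (0:ℝ) (2*π) := by constructor <;> [rfl; positivity] 
  have hval : (∫ x in (π/(n:ℝ))..(0:ℝ), -((n : ℝ) * sin ((n:ℝ) * x)) / ((n : ℝ) + cos ((n:ℝ) * x)))
      = log (((n : ℝ) + 1) / ((n : ℝ) - 1)) := by
    rw [hint]
    have h1 : F 0 = log ((n:ℝ) + 1) := by simp [hF]
    have h2 : F (π/(n:ℝ)) = log ((n:ℝ) - 1) := by
      have : (n:ℝ) * (π/(n:ℝ)) = π := mul_div_cancel₀ π hne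
      simp [hF, this, Real.cos_pi]
      ring_nf
    rw [h1, h2, hlogdiv]
  haveI : Nonempty (Set.Icc (0:ℝ) (2*π)) := ⟨⟨0, hmem2⟩⟩
  apply le_antisymm
  · exact ciSup_le hbound
  · have := le_ciSup hbdd (⟨⟨π/(n:ℝ), hmem1⟩, ⟨(0:ℝ), hmem2⟩⟩ :
      (Set.Icc (0:ℝ) (2*π)) × (Set.Icc (0:ℝ) (2*π)))
    rw [oscNorm]
    calc log (((n : ℝ) + 1) / ((n : ℝ) - 1))
        = |∫ x in (π/(n:ℝ))..(0:ℝ), -((n : ℝ) * sin ((n:ℝ) * x)) / ((n : ℝ) + cos ((n:ℝ) * x))| := by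
          rw [hval, abs_of_nonneg]
          rw [hlogdiv]
          have := hFub (0:ℝ); have := hFlb (0:ℝ)
          linarith [Real.log_le_log (by linarith : (0:ℝ) < (n:ℝ)-1) (by linarith : (n:ℝ)-1 ≤ (n:ℝ)+1)]
      _ ≤ _ := this
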